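/- For all integers d ≥ 2, q₁,…,q_d ≥ 2 and s ≥ 1, there exists a quasi-isometry from DL(q₁^s,…,q_d^s) to DL(q₁,…,q_d). In particular, DL_d(q) is quasi-isometric with DL_d(q^s) for every s ≥ 1. -/

import Mathlib

/-- A vertex of the homogeneous tree `T_q` with a fixed end: a pair `(f, n)` with
`f : ℤ → ℤ/qℤ` finitely supported and `f k = 0` for `k ≥ n`. -/
structure TreeVert (q : ℕ) where
  f : ℤ → ZMod q
  lvl : ℤ
  finsupp : {k : ℤ | f k ≠ 0}.Finite
  eventually_zero : ∀ k, lvl ≤ k → f k = 0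

/-- Adjacency in the tree `T_q`. -/
def treeAdj (q : ℕ) (u v : TreeVert q) : Prop :=
  (v.lvl = u.lvl + 1 ∧ ∀ k < u.lvl, u.f k = v.f k) ∨
  (u.lvl = v.lvl + 1 ∧ ∀ k < v.lvl, v.f k = u.f k)

/-- The homogeneous tree `T_q` with a fixed end, as a simple graph. -/
def treeGraph (q : ℕ) : SimpleGraph (TreeVert q) where
  Adj := treeAdj q
  symm := ⟨fun _ _ h => Or.symm h⟩
  loopless := by
    refine ⟨?_⟩
    rintro u (⟨h, _⟩ | ⟨h, _⟩) <;> omega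

/-- Vertices of the Diestel-Leader graph `DL(q₁,…,q_d)`. -/
def DLVert (d : ℕ) (q : Fin d → ℕ) : Type :=
  { x : (j : Fin d) → TreeVert (q j) // ∑ j, (x j).lvl = 0 }

/-- Adjacency in the Diestel-Leader graph. -/
def DLAdj (d : ℕ) (q : Fin d → ℕ) (x y : DLVert d q) : Prop :=
  ∃ i j : Fin d, i ≠ j ∧ treeAdj (q i) (x.1 i) (y.1 i) ∧ treeAdj (q j) (x.1 j) (y.1 j) ∧
    ∀ k, k ≠ i → k ≠ j → x.1 k = y.1 k

/-- The Diestel-Leader graph `DL(q₁,…,q_d)`. -/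
def DLGraph (d : ℕ) (q : Fin d → ℕ) : SimpleGraph (DLVert d q) where
  Adj := DLAdj d q
  symm := by
    refine ⟨?_⟩
    rintro x y ⟨i, j, hij, hi, hj, hk⟩
    exact ⟨i, j, hij, Or.symm hi, Or.symm hj, fun k h1 h2 => (hk k h1 h2).symm⟩
  loopless := by
    refine ⟨?_⟩
    rintro x ⟨i, j, hij, hi, _, _⟩
    rcases hi with ⟨h, _⟩ | ⟨h, _⟩ <;> omega

namespace DLQI

/-! ### Nat digit lemmas -/

theorem nat_digits_inj (Q : ℕ) (hQ : 1 ≤ Q) :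
    ∀ s n m, n < Q ^ s → m < Q ^ s → (∀ r < s, n / Q ^ r % Q = m / Q ^ r % Q) → n = m := by
  intro s
  induction s with
  | zero => intro n m hn hm _; simp at hn hm; omega
  | succ s ih =>
    intro n m hn hm h
    have hQ0 : 0 < Q := hQ
    have h0 := h 0 (by omega)
    simp at h0
    have hd : n / Q = m / Q := by
      refine ih (n / Q) (m / Q) ?_ ?_ ?_
      · rw [Nat.div_lt_iff_lt_mul hQ0]; rw [pow_succ] at hn; exact hn
      · rw [Nat.div_lt_iff_lt_mul hQ0]; rw [pow_succ] at hm; exact hm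
      · intro rr hr
        have := h (rr + 1) (by omega)
        rw [Nat.div_div_eq_div_mul, Nat.div_div_eq_div_mul, ← pow_succ']
        exact this
    have h1 := Nat.div_add_mod n Q
    have h2 := Nat.div_add_mod m Q
    rw [hd] at h1
    omega

theorem nat_recompose (Q : ℕ) (hQ : 1 ≤ Q) :
    ∀ (s : ℕ) (t : ℕ → ℕ), (∀ r < s, t r < Q) →
      (∑ r ∈ Finset.range s, t r * Q ^ r) < Q ^ s ∧
      (∀ r < s, (∑ r' ∈ Finset.range s, t r' * Q ^ r') / Q ^ r % Q = t r) := by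
  intro s
  induction s with
  | zero => intro t _; simp
  | succ s ih =>
    intro t ht
    have hQ0 : 0 < Q := hQ
    set M := ∑ r ∈ Finset.range s, t (r + 1) * Q ^ r with hM
    obtain ⟨ihlt, ihdig⟩ := ih (fun r => t (r + 1)) (fun r hr => ht (r + 1) (by omega))
    have hsum : (∑ r ∈ Finset.range (s + 1), t r * Q ^ r) = t 0 + Q * M := by
      rw [Finset.sum_range_succ']
      simp only [pow_zero, mul_one, hM, Finset.mul_sum]
      rw [add_comm]
      congr 1
      apply Finset.sum_congr rfl
      intro r _
      rw [pow_succ]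
      ring
    constructor
    · rw [hsum, pow_succ]
      have h0 : t 0 < Q := ht 0 (by omega)
      have h2 : Q * (M + 1) ≤ Q * Q ^ s := Nat.mul_le_mul_left Q ihlt
      calc t 0 + Q * M < Q + Q * M := by omega
        _ = Q * (M + 1) := by ring
        _ ≤ Q * Q ^ s := h2
        _ = Q ^ s * Q := by ring
    · intro r hr
      rcases Nat.eq_zero_or_pos r with hr0 | hr0
      · subst hr0
        simp only [pow_zero, Nat.div_one, hsum]
        rw [Nat.add_mul_mod_self_left]
        exact Nat.mod_eq_of_lt (ht 0 (by omega))
      · obtain ⟨r', rfl⟩ := Nat.exists_eq_add_of_le hr0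
        rw [hsum]
        have : (t 0 + Q * M) / Q ^ (1 + r') = M / Q ^ r' := by
          rw [pow_add, pow_one, ← Nat.div_div_eq_div_mul,
            Nat.add_mul_div_left _ _ hQ0, Nat.div_eq_of_lt (ht 0 (by omega))]
          simp
        rw [this]
        simpa [Nat.add_comm] using ihdig r' (by omega)

/-! ### Tree vertices: canonical geodesic lines -/

theorem TreeVert.ext' {q : ℕ} {u v : TreeVert q} (hf : u.f = v.f) (hl : u.lvl = v.lvl) :
    u = v := by
  cases u; cases v; simp_all

def truncF {q : ℕ} (f : ℤ → ZMod q) (l : ℤ) : ℤ → ZMod q := fun k => if l ≤ k then 0 else f k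

def canon {q : ℕ} (u : TreeVert q) (n : ℤ) : TreeVert q where
  f := truncF u.f (min n u.lvl)
  lvl := n
  finsupp := u.finsupp.subset (by
    intro k hk
    simp only [Set.mem_setOf_eq, truncF] at hk ⊢
    by_cases h : min n u.lvl ≤ k <;> simp [h] at hk ⊢ <;> tauto)
  eventually_zero := fun k hk => by
    simp only [truncF, if_pos (le_trans (min_le_left _ _) hk)]

@[simp] theorem canon_lvl {q : ℕ} (u : TreeVert q) (n : ℤ) : (canon u n).lvl = n := rfl

theorem canon_f {q : ℕ} (u : TreeVert q) (n k : ℤ) :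
    (canon u n).f k = if min n u.lvl ≤ k then 0 else u.f k := rfl

theorem canon_self {q : ℕ} (u : TreeVert q) : canon u u.lvl = u := by
  refine TreeVert.ext' ?_ rfl
  funext k
  rw [canon_f, min_self]
  by_cases h : u.lvl ≤ k
  · rw [if_pos h, (u.eventually_zero k h).symm]
  · rw [if_neg h]

theorem canon_adj_up {q : ℕ} (u : TreeVert q) (n : ℤ) :
    treeAdj q (canon u n) (canon u (n + 1)) := by
  left
  refine ⟨rfl, fun k hk => ?_⟩
  rw [canon_lvl] at hk
  rw [canon_f, canon_f]
  rcases le_or_gt u.lvl k with h | h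
  · rw [if_pos (min_le_of_right_le h), if_pos (min_le_of_right_le h)]
  · rw [if_neg (by omega), if_neg (by omega)]

theorem canon_congr {q : ℕ} {u v : TreeVert q} {n : ℤ} (hu : n ≤ u.lvl) (hv : n ≤ v.lvl)
    (h : ∀ k < n, u.f k = v.f k) : canon u n = canon v n := by
  refine TreeVert.ext' ?_ rfl
  funext k
  rw [canon_f, canon_f, min_eq_left hu, min_eq_left hv]
  by_cases hk : n ≤ k
  · rw [if_pos hk, if_pos hk]
  · rw [if_neg hk, if_neg hk]; exact h k (by omega)

/-! ### DL configurations and walks -/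

variable {d : ℕ} {r : Fin d → ℕ}

def Z (w : ∀ j, TreeVert (r j)) (n : Fin d → ℤ) (hn : ∑ j, n j = 0) : DLVert d r :=
  ⟨fun j => canon (w j) (n j), by simpa using hn⟩

theorem Z_eq (w : ∀ j, TreeVert (r j)) {n m : Fin d → ℤ} (hn : ∑ j, n j = 0)
    (hm : ∑ j, m j = 0) (h : n = m) : Z w n hn = Z w m hm := by
  subst h; rfl

theorem walkW (w : ∀ j, TreeVert (r j)) :
    ∀ (N : ℕ) (n m : Fin d → ℤ) (hn : ∑ j, n j = 0) (hm : ∑ j, m j = 0),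
      (∑ j, (n j - m j).natAbs) = N →
      ∃ p : (DLGraph d r).Walk (Z w n hn) (Z w m hm), p.length ≤ N := by
  intro N
  induction N using Nat.strong_induction_on with
  | _ N ih =>
    intro n m hn hm hN
    by_cases hnm : n = m
    · exact ⟨(SimpleGraph.Walk.nil).copy rfl (Z_eq w hn hm hnm), by simp⟩
    · have hsub : ∑ j, (n j - m j) = 0 := by
        rw [Finset.sum_sub_distrib, hn, hm, sub_zero]
      have hex1 : ∃ i, n i < m i := by
        by_contra hc
        push_neg at hc
        apply hnm
        funext j
        have := (Finset.sum_eq_zero_iff_of_nonneg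
          (fun i _ => by have := hc i; omega)).mp hsub j (Finset.mem_univ j)
        omega
      have hex2 : ∃ k, m k < n k := by
        by_contra hc
        push_neg at hc
        apply hnm
        funext j
        have hsub' : ∑ j, (m j - n j) = 0 := by
          rw [Finset.sum_sub_distrib, hn, hm, sub_zero]
        have := (Finset.sum_eq_zero_iff_of_nonneg
          (fun i _ => by have := hc i; omega)).mp hsub' j (Finset.mem_univ j)
        omega
      obtain ⟨i, hi⟩ := hex1
      obtain ⟨k, hk⟩ := hex2
      have hik : i ≠ k := by intro h; subst h; omega
      set n' : Fin d → ℤ :=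
        fun j => n j + (if j = i then 1 else 0) - (if j = k then 1 else 0) with hn'def
      have hn' : ∑ j, n' j = 0 := by
        simp only [hn'def]
        rw [Finset.sum_sub_distrib, Finset.sum_add_distrib, hn]
        simp [Finset.sum_ite_eq']
      have hadj : (DLGraph d r).Adj (Z w n hn) (Z w n' hn') := by
        refine ⟨i, k, hik, ?_, ?_, ?_⟩
        · have h1 : n' i = n i + 1 := by simp [hn'def, hik]
          show treeAdj (r i) (canon (w i) (n i)) (canon (w i) (n' i))
          rw [h1]
          exact canon_adj_up (w i) (n i)
        · have h1 : n k = n' k + 1 := by simp [hn'def, hik.symm]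
          show treeAdj (r k) (canon (w k) (n k)) (canon (w k) (n' k))
          rw [h1]
          exact Or.symm (canon_adj_up (w k) (n' k))
        · intro j hji hjk
          have : n' j = n j := by simp [hn'def, hji, hjk]
          show canon (w j) (n j) = canon (w j) (n' j)
          rw [this]
      have hmeas : (∑ j, (n' j - m j).natAbs) + 2 = N := by
        have key : ∀ j, (n' j - m j).natAbs + ((if j = i then 1 else 0) +
            (if j = k then 1 else 0)) = (n j - m j).natAbs := by
          intro j
          by_cases hji : j = i
          · subst hji; simp [hn'def, hik]; omega
          · by_cases hjk : j = k
            · subst hjk; simp [hn'def, hji]; omega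
            · simp [hn'def, hji, hjk]
        calc (∑ j, (n' j - m j).natAbs) + 2
            = ∑ j, ((n' j - m j).natAbs + ((if j = i then 1 else 0) +
                (if j = k then 1 else 0))) := by
              rw [Finset.sum_add_distrib, Finset.sum_add_distrib]
              simp [Finset.sum_ite_eq']
          _ = ∑ j, (n j - m j).natAbs := Finset.sum_congr rfl (fun j _ => key j)
          _ = N := hN
      obtain ⟨p', hp'⟩ := ih (N - 2) (by omega) n' m hn' hm (by omega)
      exact ⟨SimpleGraph.Walk.cons hadj p', by
        rw [SimpleGraph.Walk.length_cons]; omega⟩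

theorem Lrec (hd : 2 ≤ d) (x y : DLVert d r) (l : Fin d → ℤ)
    (h1 : ∀ j, l j ≤ (x.1 j).lvl) (h2 : ∀ j, l j ≤ (y.1 j).lvl)
    (h3 : ∀ j, ∀ k < l j, (x.1 j).f k = (y.1 j).f k) :
    ∀ (c : ℕ) (S : Finset (Fin d)), S.card = c →
      ∀ (n : Fin d → ℤ) (hn : ∑ j, n j = 0),
        (∀ j, l j ≤ n j ∧ n j ≤ l j + (∑ i, ((x.1 i).lvl - l i))) →
        ∃ p : (DLGraph d r).Walk
            (Z (fun j => if j ∈ S then x.1 j else y.1 j) n hn) y,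
          (p.length : ℤ) ≤ ((c : ℤ) + 1) * ((d : ℤ) * (∑ i, ((x.1 i).lvl - l i))) := by
  set σ : ℤ := ∑ i, ((x.1 i).lvl - l i) with hσ
  have hlsum : ∑ j, l j = -σ := by
    rw [hσ, Finset.sum_sub_distrib, x.2]
    ring
  have hσy : ∑ i, ((y.1 i).lvl - l i) = σ := by
    rw [Finset.sum_sub_distrib, y.2, hσ, Finset.sum_sub_distrib, x.2]
  have hσ0 : 0 ≤ σ := by
    rw [hσ]
    exact Finset.sum_nonneg (fun i _ => by have := h1 i; omega)
  have hxb : ∀ j, (x.1 j).lvl ≤ l j + σ := by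
    intro j
    have := Finset.single_le_sum (f := fun i => (x.1 i).lvl - l i)
      (fun i _ => by show (0:ℤ) ≤ (x.1 i).lvl - l i; have := h1 i; omega) (Finset.mem_univ j)
    rw [← hσ] at this
    omega
  have hyb : ∀ j, (y.1 j).lvl ≤ l j + σ := by
    intro j
    have := Finset.single_le_sum (f := fun i => (y.1 i).lvl - l i)
      (fun i _ => by show (0:ℤ) ≤ (y.1 i).lvl - l i; have := h2 i; omega) (Finset.mem_univ j)
    rw [hσy] at this
    omega
  intro c
  induction c with
  | zero =>
    intro S hS n hn hbox
    rw [Finset.card_eq_zero] at hS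
    subst hS
    obtain ⟨p, hp⟩ := walkW (r := r) (fun j => if j ∈ (∅ : Finset (Fin d)) then x.1 j else y.1 j)
      (∑ j, (n j - (y.1 j).lvl).natAbs) n (fun j => (y.1 j).lvl) hn y.2 rfl
    have hend : Z (r := r) (fun j => if j ∈ (∅ : Finset (Fin d)) then x.1 j else y.1 j)
        (fun j => (y.1 j).lvl) y.2 = y := by
      apply Subtype.ext
      funext j
      show canon (if j ∈ (∅ : Finset (Fin d)) then x.1 j else y.1 j) ((y.1 j).lvl) = y.1 j
      simp only [Finset.notMem_empty, if_false]
      exact canon_self (y.1 j)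
    refine ⟨p.copy rfl hend, ?_⟩
    rw [SimpleGraph.Walk.length_copy]
    have hbnd : ∀ j, ((n j - (y.1 j).lvl).natAbs : ℤ) ≤ σ := by
      intro j
      have hb := hbox j
      have hy1 := h2 j
      have hy2 := hyb j
      omega
    calc (p.length : ℤ) ≤ (∑ j, (n j - (y.1 j).lvl).natAbs : ℕ) := by exact_mod_cast hp
      _ = ∑ j, ((n j - (y.1 j).lvl).natAbs : ℤ) := by push_cast; ring
      _ ≤ ∑ _j : Fin d, σ := Finset.sum_le_sum (fun j _ => hbnd j)
      _ = (d : ℤ) * σ := by rw [Finset.sum_const, Finset.card_univ, Fintype.card_fin]; ring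
      _ ≤ (0 + 1) * ((d : ℤ) * σ) := by nlinarith [hσ0]
  | succ c ihc =>
    intro S hS n hn hbox
    have hSne : S.Nonempty := by
      rw [← Finset.card_pos, hS]; omega
    obtain ⟨j0, hj0⟩ := hSne
    have hi0 : (0 : ℕ) < d := by omega
    have hi1 : (1 : ℕ) < d := by omega
    set pj : Fin d := if j0 = ⟨0, hi0⟩ then ⟨1, hi1⟩ else ⟨0, hi0⟩ with hpjdef
    have hpj : pj ≠ j0 := by
      by_cases h : j0 = ⟨0, hi0⟩
      · rw [hpjdef, if_pos h, h]
        intro hc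
        exact absurd (congrArg Fin.val hc) (by norm_num)
      · rw [hpjdef, if_neg h]
        exact fun hc => h hc.symm
    set cfg : Fin d → ℤ := fun k => l k + (if k = pj then σ else 0) with hcfgdef
    have hcfg : ∑ k, cfg k = 0 := by
      rw [hcfgdef, Finset.sum_add_distrib, hlsum]
      simp [Finset.sum_ite_eq']
    -- walk 1 : reconfigure levels to cfg
    obtain ⟨p1, hp1⟩ := walkW (r := r) (fun j => if j ∈ S then x.1 j else y.1 j)
      (∑ j, (n j - cfg j).natAbs) n cfg hn hcfg rfl
    have hp1' : (p1.length : ℤ) ≤ (d : ℤ) * σ := by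
      have hbnd : ∀ j, ((n j - cfg j).natAbs : ℤ) ≤ σ := by
        intro j
        have hb := hbox j
        have : l j ≤ cfg j ∧ cfg j ≤ l j + σ := by
          rw [hcfgdef]
          by_cases h : j = pj <;> simp [h] <;> omega
        omega
      calc (p1.length : ℤ) ≤ (∑ j, (n j - cfg j).natAbs : ℕ) := by exact_mod_cast hp1
        _ = ∑ j, ((n j - cfg j).natAbs : ℤ) := by push_cast; ring
        _ ≤ ∑ _j : Fin d, σ := Finset.sum_le_sum (fun j _ => hbnd j)
        _ = (d : ℤ) * σ := by rw [Finset.sum_const, Finset.card_univ, Fintype.card_fin]; ring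
    -- switch coordinate j0
    have hswitch : Z (r := r) (fun j => if j ∈ S then x.1 j else y.1 j) cfg hcfg =
        Z (r := r) (fun j => if j ∈ S.erase j0 then x.1 j else y.1 j) cfg hcfg := by
      apply Subtype.ext
      funext k
      show canon (if k ∈ S then x.1 k else y.1 k) (cfg k) =
        canon (if k ∈ S.erase j0 then x.1 k else y.1 k) (cfg k)
      by_cases hk : k = j0
      · subst hk
        rw [if_pos hj0, if_neg (by simp)]
        have hcfgk : cfg k = l k := by
          simp only [hcfgdef]
          rw [if_neg (fun h => hpj h.symm)]
          ring
        rw [hcfgk]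
        exact canon_congr (h1 k) (h2 k) (h3 k)
      · simp [Finset.mem_erase, hk]
    -- walk 2 : induction
    obtain ⟨p2, hp2⟩ := ihc (S.erase j0) (by rw [Finset.card_erase_of_mem hj0, hS]; omega) cfg hcfg
      (by
        intro j
        rw [hcfgdef]
        by_cases h : j = pj <;> simp [h] <;> omega)
    refine ⟨(p1.copy rfl hswitch).append p2, ?_⟩
    rw [SimpleGraph.Walk.length_append, SimpleGraph.Walk.length_copy]
    push_cast
    push_cast at hp2
    nlinarith [hp1', hp2, hσ0, hd]

theorem lemL (hd : 2 ≤ d) (x y : DLVert d r) (l : Fin d → ℤ)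
    (h1 : ∀ j, l j ≤ (x.1 j).lvl) (h2 : ∀ j, l j ≤ (y.1 j).lvl)
    (h3 : ∀ j, ∀ k < l j, (x.1 j).f k = (y.1 j).f k) :
    ((DLGraph d r).dist x y : ℤ) ≤
        ((d : ℤ) + 1) * ((d : ℤ) * (∑ i, ((x.1 i).lvl - l i))) ∧
      (DLGraph d r).Reachable x y := by
  have hbox : ∀ j, l j ≤ (x.1 j).lvl ∧
      (x.1 j).lvl ≤ l j + (∑ i, ((x.1 i).lvl - l i)) := by
    intro j
    refine ⟨h1 j, ?_⟩
    have := Finset.single_le_sum (f := fun i => (x.1 i).lvl - l i)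
      (fun i _ => by show (0:ℤ) ≤ (x.1 i).lvl - l i; have := h1 i; omega) (Finset.mem_univ j)
    omega
  obtain ⟨p, hp⟩ := Lrec hd x y l h1 h2 h3 d Finset.univ (by simp)
    (fun j => (x.1 j).lvl) x.2 hbox
  have hstart : Z (r := r) (fun j => if j ∈ (Finset.univ : Finset (Fin d)) then x.1 j else y.1 j)
      (fun j => (x.1 j).lvl) x.2 = x := by
    apply Subtype.ext
    funext j
    show canon (if j ∈ (Finset.univ : Finset (Fin d)) then x.1 j else y.1 j) ((x.1 j).lvl) = x.1 j
    rw [if_pos (Finset.mem_univ j)]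
    exact canon_self (x.1 j)
  refine ⟨?_, (p.copy hstart rfl).reachable⟩
  calc ((DLGraph d r).dist x y : ℤ) ≤ ((p.copy hstart rfl).length : ℤ) := by
        exact_mod_cast SimpleGraph.dist_le (p.copy hstart rfl)
    _ = (p.length : ℤ) := by rw [SimpleGraph.Walk.length_copy]
    _ ≤ ((d : ℤ) + 1) * ((d : ℤ) * (∑ i, ((x.1 i).lvl - l i))) := hp

theorem exists_l (x y : DLVert d r) :
    ∃ l : Fin d → ℤ, (∀ j, l j ≤ (x.1 j).lvl) ∧ (∀ j, l j ≤ (y.1 j).lvl) ∧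
      ∀ j, ∀ k < l j, (x.1 j).f k = (y.1 j).f k := by
  have key : ∀ j, ∃ lj : ℤ, lj ≤ (x.1 j).lvl ∧ lj ≤ (y.1 j).lvl ∧
      ∀ k < lj, (x.1 j).f k = (y.1 j).f k := by
    intro j
    have hfin : ({k : ℤ | (x.1 j).f k ≠ (y.1 j).f k}).Finite := by
      apply ((x.1 j).finsupp.union (y.1 j).finsupp).subset
      intro k hk
      simp only [Set.mem_setOf_eq, Set.mem_union] at hk ⊢
      by_contra hc
      push_neg at hc
      rw [hc.1, hc.2] at hk
      exact hk rfl
    obtain ⟨b, hb⟩ := hfin.bddBelow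
    refine ⟨min (min (x.1 j).lvl (y.1 j).lvl) b, by omega, by omega, ?_⟩
    intro k hk
    by_contra hc
    have := hb (show k ∈ {k : ℤ | (x.1 j).f k ≠ (y.1 j).f k} from hc)
    omega
  choose l hl1 hl2 hl3 using key
  exact ⟨l, hl1, hl2, hl3⟩

theorem walk_lower {a b : DLVert d r} (p : (DLGraph d r).Walk a b) (j : Fin d) :
    ∃ μ : ℤ, μ ≤ (a.1 j).lvl ∧ μ ≤ (b.1 j).lvl ∧ (∀ k < μ, (a.1 j).f k = (b.1 j).f k) ∧
      ((a.1 j).lvl - μ) + ((b.1 j).lvl - μ) ≤ 2 * (p.length : ℤ) := by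
  induction p with
  | nil => exact ⟨_, le_rfl, le_rfl, fun _ _ => rfl, by simp⟩
  | @cons u v w hadj p ih =>
    obtain ⟨μ', m1, m2, m3, m4⟩ := ih
    have hstep : treeAdj (r j) (u.1 j) (v.1 j) ∨ u.1 j = v.1 j := by
      obtain ⟨i, k2, hik, hi, hk2, hoth⟩ := hadj
      by_cases hji : j = i
      · subst hji; exact Or.inl hi
      · by_cases hjk : j = k2
        · subst hjk; exact Or.inl hk2
        · exact Or.inr (hoth j hji hjk)
    rcases hstep with hstep | hstep
    · refine ⟨min μ' (min (u.1 j).lvl (v.1 j).lvl), by omega, ?_, ?_, ?_⟩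
      · have : μ' ≤ (w.1 j).lvl := m2
        omega
      · intro k hk
        have huv : (u.1 j).f k = (v.1 j).f k := by
          rcases hstep with ⟨hl, hf⟩ | ⟨hl, hf⟩
          · exact hf k (by omega)
          · exact (hf k (by omega)).symm
        rw [huv]
        exact m3 k (by omega)
      · rcases hstep with ⟨hl, -⟩ | ⟨hl, -⟩ <;>
        · rw [SimpleGraph.Walk.length_cons]
          push_cast
          omega
    · rw [hstep]
      refine ⟨μ', m1, m2, m3, ?_⟩
      rw [SimpleGraph.Walk.length_cons]
      push_cast
      omega

/-! ### Digits -/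

def dig (Q s : ℕ) (a : ZMod (Q ^ s)) (r : ℕ) : ZMod Q := ((a.val / Q ^ r : ℕ) : ZMod Q)

theorem dig_zero (Q s r : ℕ) : dig Q s 0 r = 0 := by
  simp [dig, ZMod.val_zero, Nat.zero_div]

theorem dig_inj {Q s : ℕ} (hQ : 2 ≤ Q) (a b : ZMod (Q ^ s))
    (h : ∀ r < s, dig Q s a r = dig Q s b r) : a = b := by
  haveI : NeZero (Q ^ s) := ⟨pow_ne_zero s (by omega)⟩
  have hval : a.val = b.val := by
    apply nat_digits_inj Q (by omega) s _ _ (ZMod.val_lt a) (ZMod.val_lt b)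
    intro r hr
    have := h r hr
    rw [dig, dig, ZMod.natCast_eq_natCast_iff'] at this
    exact this
  rw [← ZMod.natCast_rightInverse a, ← ZMod.natCast_rightInverse b, hval]

/-! ### The map φ -/

def phiF (Q s : ℕ) (f : ℤ → ZMod (Q ^ s)) : ℤ → ZMod Q :=
  fun k => dig Q s (f (k / (s : ℤ))) (k % (s : ℤ)).toNat

theorem ediv_lt_of_lt_mul {s : ℕ} (hs : 1 ≤ s) {k c : ℤ} (h : k < (s : ℤ) * c) :
    k / (s : ℤ) < c := by
  by_contra hc
  push_neg at hc
  have h1 : (s : ℤ) * (k / (s : ℤ)) + k % (s : ℤ) = k := Int.mul_ediv_add_emod k s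
  have h2 : 0 ≤ k % (s : ℤ) := Int.emod_nonneg k (by omega)
  nlinarith [mul_le_mul_of_nonneg_left hc (show (0:ℤ) ≤ (s:ℤ) by omega)]

theorem lt_mul_of_ediv_lt {s : ℕ} (hs : 1 ≤ s) {k c : ℤ} (h : k / (s : ℤ) < c) :
    k < (s : ℤ) * c := by
  have h1 : (s : ℤ) * (k / (s : ℤ)) + k % (s : ℤ) = k := Int.mul_ediv_add_emod k s
  have h2 : k % (s : ℤ) < (s : ℤ) := Int.emod_lt_of_pos k (by omega)
  nlinarith [mul_le_mul_of_nonneg_left (show k / (s:ℤ) + 1 ≤ c by omega)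
    (show (0:ℤ) ≤ (s:ℤ) by omega)]

theorem block_ediv {s : ℕ} (hs : 1 ≤ s) (k : ℤ) (r : ℕ) (hr : r < s) :
    ((s : ℤ) * k + (r : ℤ)) / (s : ℤ) = k := by
  rw [add_comm]
  rw [Int.add_mul_ediv_left _ _ (show (s:ℤ) ≠ 0 by omega)]
  rw [Int.ediv_eq_zero_of_lt (by omega) (by omega)]
  ring

theorem block_emod {s : ℕ} (hs : 1 ≤ s) (k : ℤ) (r : ℕ) (hr : r < s) :
    ((s : ℤ) * k + (r : ℤ)) % (s : ℤ) = (r : ℤ) := by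
  rw [add_comm, Int.add_mul_emod_self_left]
  exact Int.emod_eq_of_lt (by omega) (by omega)

def phiT {Q s : ℕ} (hQ : 2 ≤ Q) (hs : 1 ≤ s) (u : TreeVert (Q ^ s)) : TreeVert Q where
  f := phiF Q s u.f
  lvl := (s : ℤ) * u.lvl
  finsupp := by
    apply (u.finsupp.biUnion (fun b _ => Set.finite_Ico ((s : ℤ) * b) ((s : ℤ) * b + s))).subset
    intro k hk
    simp only [Set.mem_setOf_eq] at hk
    have hf : u.f (k / (s : ℤ)) ≠ 0 := by
      intro hc
      apply hk
      rw [phiF, hc, dig_zero]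
    refine Set.mem_biUnion hf ?_
    have h1 : (s : ℤ) * (k / (s : ℤ)) + k % (s : ℤ) = k := Int.mul_ediv_add_emod k s
    have h2 : 0 ≤ k % (s : ℤ) := Int.emod_nonneg k (by omega)
    have h3 : k % (s : ℤ) < (s : ℤ) := Int.emod_lt_of_pos k (by omega)
    constructor <;> omega
  eventually_zero := by
    intro k hk
    have : u.lvl ≤ k / (s : ℤ) := by
      by_contra hc
      push_neg at hc
      have := lt_mul_of_ediv_lt hs hc
      omega
    rw [phiF, u.eventually_zero _ this, dig_zero]

theorem phiT_lvl {Q s : ℕ} (hQ : 2 ≤ Q) (hs : 1 ≤ s) (u : TreeVert (Q ^ s)) :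
    (phiT hQ hs u).lvl = (s : ℤ) * u.lvl := rfl

theorem phiD1 {Q s : ℕ} (hQ : 2 ≤ Q) (hs : 1 ≤ s) (f g : ℤ → ZMod (Q ^ s)) (c : ℤ)
    (h : ∀ k < c, f k = g k) : ∀ k < (s : ℤ) * c, phiF Q s f k = phiF Q s g k := by
  intro k hk
  rw [phiF, phiF, h _ (ediv_lt_of_lt_mul hs hk)]

theorem phiD2 {Q s : ℕ} (hQ : 2 ≤ Q) (hs : 1 ≤ s) (f g : ℤ → ZMod (Q ^ s)) (c : ℤ)
    (h : ∀ k < (s : ℤ) * c, phiF Q s f k = phiF Q s g k) : ∀ k < c, f k = g k := by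
  intro k hk
  apply dig_inj hQ
  intro r hr
  have hpos : (s : ℤ) * k + (r : ℤ) < (s : ℤ) * c := by
    have : k + 1 ≤ c := by omega
    nlinarith [show ((r : ℤ)) < (s : ℤ) by exact_mod_cast hr,
      show (0:ℤ) ≤ (s:ℤ) by omega]
  have := h ((s : ℤ) * k + (r : ℤ)) hpos
  rw [phiF, phiF, block_ediv hs k r hr, block_emod hs k r hr] at this
  simpa using this

def phiDL {d : ℕ} {r : Fin d → ℕ} (hr : ∀ j, 2 ≤ r j) {s : ℕ} (hs : 1 ≤ s)
    (x : DLVert d (fun j => r j ^ s)) : DLVert d r :=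
  ⟨fun j => phiT (hr j) hs (x.1 j), by
    show ∑ j, (s : ℤ) * (x.1 j).lvl = 0
    rw [← Finset.mul_sum, x.2, mul_zero]⟩

/-! ### The coarse inverse ψ -/

def psiT {Q s : ℕ} (hQ : 2 ≤ Q) (hs : 1 ≤ s) (u : TreeVert Q) (m : ℤ) : TreeVert (Q ^ s) where
  f := fun k => if k < m then
      ((∑ r ∈ Finset.range s, (u.f ((s : ℤ) * k + r)).val * Q ^ r : ℕ) : ZMod (Q ^ s)) else 0
  lvl := m
  finsupp := by
    apply (u.finsupp.image (fun t => t / (s : ℤ))).subset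
    intro k hk
    simp only [Set.mem_setOf_eq] at hk
    by_cases hkm : k < m
    · rw [if_pos hkm] at hk
      have : ∃ rr ∈ Finset.range s, (u.f ((s : ℤ) * k + rr)).val ≠ 0 := by
        by_contra hc
        push_neg at hc
        apply hk
        rw [Finset.sum_eq_zero (fun rr hrr => by rw [hc rr hrr, zero_mul])]
        simp
      obtain ⟨rr, hrr, hval⟩ := this
      refine ⟨(s : ℤ) * k + rr, ?_, ?_⟩
      · simp only [Set.mem_setOf_eq]
        intro hc
        rw [hc, ZMod.val_zero] at hval
        exact hval rfl
      · exact block_ediv hs k rr (Finset.mem_range.mp hrr)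
    · rw [if_neg hkm] at hk
      exact absurd rfl hk
  eventually_zero := fun k hk => if_neg (by omega)

theorem psiT_lvl {Q s : ℕ} (hQ : 2 ≤ Q) (hs : 1 ≤ s) (u : TreeVert Q) (m : ℤ) :
    (psiT hQ hs u m).lvl = m := rfl

theorem phi_psiT_f {Q s : ℕ} (hQ : 2 ≤ Q) (hs : 1 ≤ s) (u : TreeVert Q) (m : ℤ) :
    ∀ k < (s : ℤ) * m, (phiT hQ hs (psiT hQ hs u m)).f k = u.f k := by
  intro k hk
  have hb : k / (s : ℤ) < m := ediv_lt_of_lt_mul hs hk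
  have h2 : 0 ≤ k % (s : ℤ) := Int.emod_nonneg k (by omega)
  have h3 : k % (s : ℤ) < (s : ℤ) := Int.emod_lt_of_pos k (by omega)
  have hrs : (k % (s : ℤ)).toNat < s := by omega
  haveI : NeZero Q := ⟨by omega⟩
  obtain ⟨hNlt, hNdig⟩ := nat_recompose Q (by omega) s
    (fun rr => (u.f ((s : ℤ) * (k / (s : ℤ)) + rr)).val)
    (fun rr _ => ZMod.val_lt _)
  set N : ℕ := ∑ rr ∈ Finset.range s, (u.f ((s : ℤ) * (k / (s : ℤ)) + rr)).val * Q ^ rr with hN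
  show dig Q s ((psiT hQ hs u m).f (k / (s : ℤ))) (k % (s : ℤ)).toNat = u.f k
  have hval : ((psiT hQ hs u m).f (k / (s : ℤ))).val = N := by
    show (if k / (s : ℤ) < m then ((N : ℕ) : ZMod (Q ^ s)) else 0).val = N
    rw [if_pos hb, ZMod.val_natCast_of_lt hNlt]
  rw [dig, hval]
  have := hNdig (k % (s : ℤ)).toNat hrs
  rw [← ZMod.natCast_mod, this]
  have harg : (s : ℤ) * (k / (s : ℤ)) + ((k % (s : ℤ)).toNat : ℤ) = k := by
    have := Int.mul_ediv_add_emod k s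
    omega
  rw [harg]
  haveI : NeZero Q := ⟨by omega⟩
  exact ZMod.natCast_rightInverse (u.f k)

end DLQI

open DLQI in
set_option maxHeartbeats 2000000 in
/-- For all `d ≥ 2`, `q₁,…,q_d ≥ 2` and `s ≥ 1` there is a quasi-isometry
from `DL(q₁^s,…,q_d^s)` to `DL(q₁,…,q_d)`. -/
theorem DL_power_quasi_isometric (d : ℕ) (hd : 2 ≤ d) (q : Fin d → ℕ) (hq : ∀ j, 2 ≤ q j)
    (s : ℕ) (hs : 1 ≤ s) :
    ∃ (φ : DLVert d (fun j => q j ^ s) → DLVert d q) (A B : ℝ), 0 < A ∧ 0 ≤ B ∧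
      (∀ x y : DLVert d (fun j => q j ^ s),
        A⁻¹ * ((DLGraph d q).dist (φ x) (φ y) : ℝ) - B ≤
            ((DLGraph d (fun j => q j ^ s)).dist x y : ℝ) ∧
        ((DLGraph d (fun j => q j ^ s)).dist x y : ℝ) ≤
            A * ((DLGraph d q).dist (φ x) (φ y) : ℝ) + B) ∧
      (∀ z : DLVert d q, ∃ x : DLVert d (fun j => q j ^ s),
        ((DLGraph d q).dist (φ x) z : ℝ) ≤ B) := by
  set φ : DLVert d (fun j => q j ^ s) → DLVert d q := phiDL hq hs with hφ
  have hD2 : (2:ℤ) ≤ (d:ℤ) := by exact_mod_cast hd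
  have hS1 : (1:ℤ) ≤ (s:ℤ) := by exact_mod_cast hs
  -- Fact A : φ is Lipschitz
  have factA : ∀ x y : DLVert d (fun j => q j ^ s),
      ((DLGraph d q).dist (φ x) (φ y) : ℤ) ≤
        2 * (d:ℤ) * (d:ℤ) * ((d:ℤ) + 1) * (s:ℤ) *
          ((DLGraph d (fun j => q j ^ s)).dist x y : ℤ) := by
    intro x y
    obtain ⟨l0, hl01, hl02, hl03⟩ := exists_l x y
    have hreach := (lemL hd x y l0 hl01 hl02 hl03).2
    obtain ⟨p, hp⟩ := hreach.exists_walk_length_eq_dist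
    have hμ := fun j => walk_lower p j
    choose μ hm1 hm2 hm3 hm4 using hμ
    have key := (lemL hd (φ x) (φ y) (fun j => (s:ℤ) * μ j)
      (fun j => by
        show (s:ℤ) * μ j ≤ (s:ℤ) * (x.1 j).lvl
        exact mul_le_mul_of_nonneg_left (hm1 j) (by omega))
      (fun j => by
        show (s:ℤ) * μ j ≤ (s:ℤ) * (y.1 j).lvl
        exact mul_le_mul_of_nonneg_left (hm2 j) (by omega))
      (fun j => by
        show ∀ k < (s:ℤ) * μ j, phiF (q j) s (x.1 j).f k = phiF (q j) s (y.1 j).f k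
        exact phiD1 (hq j) hs _ _ (μ j) (hm3 j))).1
    have hsum : (∑ i, (((φ x).1 i).lvl - (s:ℤ) * μ i)) ≤
        (d:ℤ) * ((s:ℤ) * (2 * (p.length : ℤ))) := by
      have heach : ∀ i, ((φ x).1 i).lvl - (s:ℤ) * μ i ≤ (s:ℤ) * (2 * (p.length : ℤ)) := by
        intro i
        show (s:ℤ) * (x.1 i).lvl - (s:ℤ) * μ i ≤ (s:ℤ) * (2 * (p.length : ℤ))
        have h4 := hm4 i
        have h2 := hm2 i
        have hstep : (x.1 i).lvl - μ i ≤ 2 * (p.length : ℤ) := by omega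
        nlinarith
      calc (∑ i, (((φ x).1 i).lvl - (s:ℤ) * μ i))
          ≤ ∑ _i : Fin d, (s:ℤ) * (2 * (p.length : ℤ)) :=
            Finset.sum_le_sum (fun i _ => heach i)
        _ = (d:ℤ) * ((s:ℤ) * (2 * (p.length : ℤ))) := by
            rw [Finset.sum_const, Finset.card_univ, Fintype.card_fin]
            push_cast; ring
    have hlen : (p.length : ℤ) = ((DLGraph d (fun j => q j ^ s)).dist x y : ℤ) := by
      exact_mod_cast hp
    have hlen0 : 0 ≤ (p.length : ℤ) := by positivity
    refine le_trans key ?_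
    rw [← hlen]
    nlinarith [mul_le_mul_of_nonneg_left hsum
      (show (0:ℤ) ≤ ((d:ℤ) + 1) * (d:ℤ) by nlinarith)]
  -- Fact B : lower bound
  have factB : ∀ x y : DLVert d (fun j => q j ^ s),
      (s:ℤ) * ((DLGraph d (fun j => q j ^ s)).dist x y : ℤ) ≤
        2 * (d:ℤ) * (d:ℤ) * ((d:ℤ) + 1) * ((DLGraph d q).dist (φ x) (φ y) : ℤ) +
          (d:ℤ) * (d:ℤ) * ((d:ℤ) + 1) * (s:ℤ) := by
    intro x y
    obtain ⟨l0, hl01, hl02, hl03⟩ := exists_l (φ x) (φ y)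
    have hreach := (lemL hd (φ x) (φ y) l0 hl01 hl02 hl03).2
    obtain ⟨p, hp⟩ := hreach.exists_walk_length_eq_dist
    have hμ := fun j => walk_lower p j
    choose μ hm1 hm2 hm3 hm4 using hμ
    have hm1' : ∀ j, μ j / (s:ℤ) ≤ (x.1 j).lvl := by
      intro j
      have h1 : μ j ≤ (s:ℤ) * (x.1 j).lvl := hm1 j
      have := Int.ediv_le_ediv (show (0:ℤ) < (s:ℤ) by omega) h1
      rwa [Int.mul_ediv_cancel_left _ (show (s:ℤ) ≠ 0 by omega)] at this
    have hm2' : ∀ j, μ j / (s:ℤ) ≤ (y.1 j).lvl := by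
      intro j
      have h1 : μ j ≤ (s:ℤ) * (y.1 j).lvl := hm2 j
      have := Int.ediv_le_ediv (show (0:ℤ) < (s:ℤ) by omega) h1
      rwa [Int.mul_ediv_cancel_left _ (show (s:ℤ) ≠ 0 by omega)] at this
    have hdivle : ∀ j, (s:ℤ) * (μ j / (s:ℤ)) ≤ μ j ∧
        μ j - (s:ℤ) * (μ j / (s:ℤ)) ≤ (s:ℤ) - 1 := by
      intro j
      have h1 := Int.mul_ediv_add_emod (μ j) (s:ℤ)
      have h2 := Int.emod_nonneg (μ j) (show (s:ℤ) ≠ 0 by omega)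
      have h3 := Int.emod_lt_of_pos (μ j) (show (0:ℤ) < (s:ℤ) by omega)
      omega
    have key := (lemL hd x y (fun j => μ j / (s:ℤ)) hm1' hm2'
      (fun j => by
        apply phiD2 (hq j) hs (x.1 j).f (y.1 j).f (μ j / (s:ℤ))
        intro k hk
        have hkμ : k < μ j := by have := (hdivle j).1; omega
        exact hm3 j k hkμ)).1
    have hsum : (∑ i, ((x.1 i).lvl - μ i / (s:ℤ))) * (s:ℤ) ≤
        (d:ℤ) * (2 * (p.length : ℤ)) + (d:ℤ) * (s:ℤ) := by
      have heach : ∀ i, ((x.1 i).lvl - μ i / (s:ℤ)) * (s:ℤ) ≤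
          (2 * (p.length : ℤ)) + (s:ℤ) := by
        intro i
        have h4 := hm4 i
        have h2 : μ i ≤ (s:ℤ) * (y.1 i).lvl := hm2 i
        have hx : (s:ℤ) * (x.1 i).lvl - μ i ≤ 2 * (p.length : ℤ) := by
          have e1 : ((φ x).1 i).lvl = (s:ℤ) * (x.1 i).lvl := rfl
          have e2 : ((φ y).1 i).lvl = (s:ℤ) * (y.1 i).lvl := rfl
          rw [e1, e2] at h4
          omega
        have h5 := (hdivle i).1
        have h6 := (hdivle i).2
        nlinarith
      calc (∑ i, ((x.1 i).lvl - μ i / (s:ℤ))) * (s:ℤ)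
          = ∑ i, ((x.1 i).lvl - μ i / (s:ℤ)) * (s:ℤ) := by rw [Finset.sum_mul]
        _ ≤ ∑ _i : Fin d, ((2 * (p.length : ℤ)) + (s:ℤ)) :=
            Finset.sum_le_sum (fun i _ => heach i)
        _ = (d:ℤ) * (2 * (p.length : ℤ)) + (d:ℤ) * (s:ℤ) := by
            rw [Finset.sum_const, Finset.card_univ, Fintype.card_fin]
            push_cast; ring
    have hlen : (p.length : ℤ) = ((DLGraph d q).dist (φ x) (φ y) : ℤ) := by
      exact_mod_cast hp
    have hkey2 : (s:ℤ) * ((DLGraph d (fun j => q j ^ s)).dist x y : ℤ) ≤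
        ((d:ℤ) + 1) * ((d:ℤ) * ((∑ i, ((x.1 i).lvl - μ i / (s:ℤ))) * (s:ℤ))) := by
      nlinarith [mul_le_mul_of_nonneg_left key (show (0:ℤ) ≤ (s:ℤ) by omega)]
    rw [← hlen]
    nlinarith [mul_le_mul_of_nonneg_left hsum
      (show (0:ℤ) ≤ ((d:ℤ) + 1) * (d:ℤ) by nlinarith)]
  -- Fact C : coarse surjectivity
  have factC : ∀ z : DLVert d q, ∃ x : DLVert d (fun j => q j ^ s),
      ((DLGraph d q).dist (φ x) z : ℤ) ≤ ((d:ℤ) + 1) * ((d:ℤ) * ((d:ℤ) * (s:ℤ))) := by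
    intro z
    set j0 : Fin d := ⟨0, by omega⟩ with hj0
    set δ : ℤ := -∑ k, ((z.1 k).lvl / (s:ℤ)) with hδ
    set m : Fin d → ℤ := fun j => (z.1 j).lvl / (s:ℤ) + (if j = j0 then δ else 0) with hm
    have hmsum : ∑ j, m j = 0 := by
      rw [hm, Finset.sum_add_distrib]
      simp [Finset.sum_ite_eq', hδ]
    set x : DLVert d (fun j => q j ^ s) :=
      ⟨fun j => psiT (hq j) hs (z.1 j) (m j), by
        show ∑ j, m j = 0
        exact hmsum⟩ with hx
    have hemod : ∀ j, 0 ≤ (z.1 j).lvl % (s:ℤ) ∧ (z.1 j).lvl % (s:ℤ) ≤ (s:ℤ) - 1 ∧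
        (s:ℤ) * ((z.1 j).lvl / (s:ℤ)) = (z.1 j).lvl - (z.1 j).lvl % (s:ℤ) := by
      intro j
      have h1 := Int.mul_ediv_add_emod ((z.1 j).lvl) (s:ℤ)
      have h2 := Int.emod_nonneg ((z.1 j).lvl) (show (s:ℤ) ≠ 0 by omega)
      have h3 := Int.emod_lt_of_pos ((z.1 j).lvl) (show (0:ℤ) < (s:ℤ) by omega)
      omega
    have hsδ : (s:ℤ) * δ = ∑ k, ((z.1 k).lvl % (s:ℤ)) := by
      rw [hδ, mul_neg, Finset.mul_sum]
      have : ∑ k, (s:ℤ) * ((z.1 k).lvl / (s:ℤ)) =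
          ∑ k, ((z.1 k).lvl - (z.1 k).lvl % (s:ℤ)) :=
        Finset.sum_congr rfl (fun k _ => (hemod k).2.2)
      rw [this, Finset.sum_sub_distrib, z.2]
      ring
    have hδ0 : 0 ≤ (s:ℤ) * δ := by
      rw [hsδ]
      exact Finset.sum_nonneg (fun k _ => (hemod k).1)
    have hδd : (s:ℤ) * δ ≤ (d:ℤ) * ((s:ℤ) - 1) := by
      rw [hsδ]
      calc ∑ k, ((z.1 k).lvl % (s:ℤ)) ≤ ∑ _k : Fin d, ((s:ℤ) - 1) :=
            Finset.sum_le_sum (fun k _ => (hemod k).2.1)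
        _ = (d:ℤ) * ((s:ℤ) - 1) := by
            rw [Finset.sum_const, Finset.card_univ, Fintype.card_fin]
            push_cast; ring
    refine ⟨x, ?_⟩
    have key := (lemL hd (φ x) z (fun j => min ((s:ℤ) * m j) ((z.1 j).lvl))
      (fun j => by
        show min ((s:ℤ) * m j) ((z.1 j).lvl) ≤ (s:ℤ) * m j
        exact min_le_left _ _)
      (fun j => min_le_right _ _)
      (fun j => by
        intro k hk
        have hk' : k < (s:ℤ) * m j := lt_of_lt_of_le hk (min_le_left _ _)
        exact phi_psiT_f (hq j) hs (z.1 j) (m j) k hk')).1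
    have hσ : (∑ i, (((φ x).1 i).lvl - min ((s:ℤ) * m i) ((z.1 i).lvl))) ≤
        (d:ℤ) * (s:ℤ) := by
      have heach : ∀ i, ((φ x).1 i).lvl - min ((s:ℤ) * m i) ((z.1 i).lvl) ≤
          (if i = j0 then (d:ℤ) * (s:ℤ) else 0) := by
        intro i
        have hlvl : ((φ x).1 i).lvl = (s:ℤ) * m i := rfl
        have he := hemod i
        by_cases hi : i = j0
        · rw [if_pos hi]
          have hmi : (s:ℤ) * m i = (s:ℤ) * ((z.1 i).lvl / (s:ℤ)) + (s:ℤ) * δ := by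
            rw [hm]; simp only [if_pos hi]; ring
          have hring : (d:ℤ) * ((s:ℤ) - 1) + (d:ℤ) = (d:ℤ) * (s:ℤ) := by ring
          rw [hlvl, hmi]
          omega
        · rw [if_neg hi]
          have hmi : (s:ℤ) * m i = (s:ℤ) * ((z.1 i).lvl / (s:ℤ)) := by
            rw [hm]; simp only [if_neg hi]; ring
          omega
      calc (∑ i, (((φ x).1 i).lvl - min ((s:ℤ) * m i) ((z.1 i).lvl)))
          ≤ ∑ i, (if i = j0 then (d:ℤ) * (s:ℤ) else 0) :=
            Finset.sum_le_sum (fun i _ => heach i)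
        _ = (d:ℤ) * (s:ℤ) := by simp [Finset.sum_ite_eq']
    refine le_trans key ?_
    nlinarith [mul_le_mul_of_nonneg_left hσ
      (show (0:ℤ) ≤ ((d:ℤ) + 1) * (d:ℤ) by nlinarith)]
  -- Assemble
  have hApos : 0 < 2 * d * d * (d + 1) * s := by
    have h1 : 0 < d := by omega
    have h2 : 0 < s := by omega
    have h3 : 0 < d + 1 := by omega
    exact Nat.mul_pos (Nat.mul_pos (Nat.mul_pos (Nat.mul_pos (by norm_num) h1) h1) h3) h2
  have hBpos : 0 < 2 * d * d * (d + 1) * (d + 1) * s := by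
    have h1 : 0 < d := by omega
    have h2 : 0 < s := by omega
    have h3 : 0 < d + 1 := by omega
    exact Nat.mul_pos (Nat.mul_pos (Nat.mul_pos (Nat.mul_pos (Nat.mul_pos
      (by norm_num) h1) h1) h3) h3) h2
  refine ⟨φ, ((2 * d * d * (d + 1) * s : ℕ) : ℝ), ((2 * d * d * (d + 1) * (d + 1) * s : ℕ) : ℝ),
    by exact_mod_cast hApos, by positivity, ?_, ?_⟩
  · intro x y
    have hA := factA x y
    have hB := factB x y
    set Lq : ℕ := (DLGraph d q).dist (φ x) (φ y) with hLq
    set L : ℕ := (DLGraph d (fun j => q j ^ s)).dist x y with hL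
    constructor
    · have h1 : (Lq : ℝ) ≤ ((2 * d * d * (d + 1) * s : ℕ) : ℝ) * (L : ℝ) := by
        have hz : (Lq : ℤ) ≤ ((2 * d * d * (d + 1) * s : ℕ) : ℤ) * (L : ℤ) := by
          have c1 : ((2 * d * d * (d + 1) * s : ℕ) : ℤ) =
              2 * (d:ℤ) * (d:ℤ) * ((d:ℤ) + 1) * (s:ℤ) := by push_cast; ring
          rw [c1]
          calc (Lq : ℤ) ≤ 2 * (d:ℤ) * (d:ℤ) * ((d:ℤ) + 1) * (s:ℤ) * (L:ℤ) := hA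
            _ = 2 * (d:ℤ) * (d:ℤ) * ((d:ℤ) + 1) * (s:ℤ) * (L:ℤ) := by ring
        exact_mod_cast hz
      have h2 : ((2 * d * d * (d + 1) * s : ℕ) : ℝ)⁻¹ * (Lq : ℝ) ≤ (L : ℝ) := by
        rw [inv_mul_le_iff₀ (by exact_mod_cast hApos)]
        exact h1
      have h3 : (0:ℝ) ≤ ((2 * d * d * (d + 1) * (d + 1) * s : ℕ) : ℝ) := by positivity
      linarith
    · have hL0 : (0:ℤ) ≤ (L:ℤ) := by positivity
      have hLq0 : (0:ℤ) ≤ (Lq:ℤ) := by positivity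
      have hLsL : (L:ℤ) ≤ (s:ℤ) * (L:ℤ) := by nlinarith
      have hdd : (0:ℤ) ≤ 2 * (d:ℤ) * (d:ℤ) * ((d:ℤ) + 1) := by nlinarith
      have e1 : 2 * (d:ℤ) * (d:ℤ) * ((d:ℤ) + 1) * (Lq:ℤ) ≤
          2 * (d:ℤ) * (d:ℤ) * ((d:ℤ) + 1) * (s:ℤ) * (Lq:ℤ) := by
        nlinarith [mul_nonneg (mul_nonneg hdd hLq0) (show (0:ℤ) ≤ (s:ℤ) - 1 by omega)]
      have e2 : (d:ℤ) * (d:ℤ) * ((d:ℤ) + 1) * (s:ℤ) ≤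
          2 * (d:ℤ) * (d:ℤ) * ((d:ℤ) + 1) * ((d:ℤ) + 1) * (s:ℤ) := by
        nlinarith [mul_nonneg (mul_nonneg (mul_nonneg
          (show (0:ℤ) ≤ (d:ℤ) * (d:ℤ) by nlinarith)
          (show (0:ℤ) ≤ (d:ℤ) + 1 by omega))
          (show (0:ℤ) ≤ 2 * (d:ℤ) + 1 by omega))
          (show (0:ℤ) ≤ (s:ℤ) by omega)]
      have h1 : (L : ℤ) ≤ ((2 * d * d * (d + 1) * s : ℕ) : ℤ) * (Lq : ℤ) +
          ((2 * d * d * (d + 1) * (d + 1) * s : ℕ) : ℤ) := by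
        have c1 : ((2 * d * d * (d + 1) * s : ℕ) : ℤ) =
            2 * (d:ℤ) * (d:ℤ) * ((d:ℤ) + 1) * (s:ℤ) := by push_cast; ring
        have c2 : ((2 * d * d * (d + 1) * (d + 1) * s : ℕ) : ℤ) =
            2 * (d:ℤ) * (d:ℤ) * ((d:ℤ) + 1) * ((d:ℤ) + 1) * (s:ℤ) := by push_cast; ring
        rw [c1, c2]
        linarith [hB, hLsL, e1, e2]
      exact_mod_cast h1
  · intro z
    obtain ⟨x, hx⟩ := factC z
    refine ⟨x, ?_⟩
    have h1 : ((DLGraph d q).dist (φ x) z : ℤ) ≤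
        ((2 * d * d * (d + 1) * (d + 1) * s : ℕ) : ℤ) := by
      refine le_trans hx ?_
      push_cast
      nlinarith [hD2, hS1]
    exact_mod_cast h1
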